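/- For every n > 1 there exists kₙ such that every finite subgroup of GL(n, ℤ) has order less than kₙ; moreover, for square-free k ≥ kₙ, the subgroup of GL(n, ℤ) consisting of matrices whose (i,1) entries are divisible by k for all i ≥ 2 has index at least k in GL(n, ℤ). -/

import Mathlib

lemma aux_mul_dvd {n : ℕ} (d : ℤ) (M X : Matrix (Fin n) (Fin n) ℤ)
    (h : ∀ i j, d ∣ M i j) : ∀ i j, d ∣ (M * X) i j := by
  intro i j
  rw [Matrix.mul_apply]
  exact Finset.dvd_sum fun k _ => (h i k).mul_right _

lemma aux_sq_dvd {n : ℕ} (d : ℤ) (N : Matrix (Fin n) (Fin n) ℤ)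
    (h : ∀ i j, d ∣ N i j) : ∀ i j, d * d ∣ (N * N) i j := by
  intro i j
  rw [Matrix.mul_apply]
  exact Finset.dvd_sum fun k _ => mul_dvd_mul (h i k) (h k j)

/-- Torsion elements of the mod-4 congruence kernel are trivial. -/
lemma aux_key {n : ℕ} (A : Matrix (Fin n) (Fin n) ℤ) (p : ℕ) (hp : p.Prime)
    (hA : A ^ p = 1) (hdvd : ∀ i j, (4 : ℤ) ∣ (A - 1) i j) : A = 1 := by
  classical
  by_contra hne
  set N : Matrix (Fin n) (Fin n) ℤ := A - 1 with hNdef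
  have hN0 : N ≠ 0 := sub_ne_zero.mpr hne
  obtain ⟨i0, h0⟩ := Function.ne_iff.mp hN0
  obtain ⟨j0, h0⟩ := Function.ne_iff.mp h0
  have h0 : N i0 j0 ≠ 0 := h0
  -- find maximal power of 2 dividing all entries
  have hex : ∃ t : ℕ, ¬ ∀ i j, (2 ^ t : ℤ) ∣ N i j := by
    refine ⟨(N i0 j0).natAbs, fun h => ?_⟩
    have h1 : (2:ℤ) ^ (N i0 j0).natAbs ≤ |N i0 j0| :=
      Int.le_of_dvd (abs_pos.mpr h0) ((dvd_abs _ _).mpr (h i0 j0))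
    have h2 : ((N i0 j0).natAbs : ℤ) < 2 ^ (N i0 j0).natAbs := by
      exact_mod_cast Nat.lt_two_pow_self
    rw [Int.abs_eq_natAbs] at h1
    omega
  set s : ℕ := Nat.find hex with hsdef
  have hspec : ¬ ∀ i j, (2 ^ s : ℤ) ∣ N i j := Nat.find_spec hex
  have hmin : ∀ t, t < s → ∀ i j, (2 ^ t : ℤ) ∣ N i j := by
    intro t ht
    by_contra hc
    exact absurd (Nat.find_min hex ht) (not_not.mpr hc)
  have hs3 : 3 ≤ s := by
    by_contra hc
    push_neg at hc
    apply hspec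
    intro i j
    exact dvd_trans (pow_dvd_pow 2 (by omega)) ((show ((2:ℤ)^2 = 4) by norm_num) ▸ hdvd i j)
  set m : ℕ := s - 1 with hmdef
  have hm2 : 2 ≤ m := by omega
  have hm1 : ∀ i j, (2 ^ m : ℤ) ∣ N i j := hmin m (by omega)
  have hmtop : ¬ ∀ i j, (2 ^ (m+1) : ℤ) ∣ N i j := by
    have : m + 1 = s := by omega
    rw [this]; exact hspec
  -- binomial expansion
  obtain ⟨q, hq⟩ : ∃ q, p = q + 2 := ⟨p - 2, by have := hp.two_le; omega⟩
  have hbin := (Commute.one_right N).add_pow p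
  have hAeq : A = N + 1 := by rw [hNdef, sub_add_cancel]
  rw [← hAeq, hA, hq] at hbin
  rw [show q + 2 + 1 = (q + 1) + 1 + 1 from rfl] at hbin
  rw [Finset.sum_range_succ', Finset.sum_range_succ'] at hbin
  simp only [one_pow, mul_one, pow_zero, zero_add, Nat.choose_zero_right, Nat.cast_one, one_mul,
    Nat.choose_one_right, pow_one] at hbin
  -- hbin : 1 = ∑ k in range (q+1), N^(k+1+1) * ↑(choose (q+2) (k+1+1)) + N * ↑(q+2) + 1
  set T : Matrix (Fin n) (Fin n) ℤ :=
    ∑ k ∈ Finset.range (q + 1), N ^ k * ((q+2).choose (k+1+1) : Matrix (Fin n) (Fin n) ℤ) with hT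
  have hsum : ∑ k ∈ Finset.range (q + 1), N ^ (k+1+1) * ((q+2).choose (k+1+1) : Matrix (Fin n) (Fin n) ℤ)
      = N * N * T := by
    rw [hT, Finset.mul_sum]
    refine Finset.sum_congr rfl fun k _ => ?_
    rw [show k + 1 + 1 = 2 + k by omega, pow_add, pow_two, mul_assoc, mul_assoc]
  rw [hsum] at hbin
  have hkey : N * ((q+2 : ℕ) : Matrix (Fin n) (Fin n) ℤ) = -(N * N * T) := by
    have h1 : N * N * T + N * ((q+2 : ℕ) : Matrix (Fin n) (Fin n) ℤ) + 1
        = 0 + 1 := by rw [zero_add, ← hbin]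
    have h2 := add_left_injective (1 : Matrix (Fin n) (Fin n) ℤ) h1
    exact eq_neg_of_add_eq_zero_right h2
  -- entrywise divisibility
  have hNN : ∀ i j, (2:ℤ) ^ (2 * m) ∣ (N * N) i j := by
    intro i j
    have := aux_sq_dvd ((2:ℤ)^m) N hm1 i j
    rwa [← pow_add, show m + m = 2 * m by omega] at this
  have hent : ∀ i j, (2:ℤ) ^ (2 * m) ∣ (p : ℤ) * N i j := by
    intro i j
    have h1 : (N * ((q+2 : ℕ) : Matrix (Fin n) (Fin n) ℤ)) i j = (p:ℤ) * N i j := by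
      have hcomm : N * ((q+2:ℕ) : Matrix (Fin n) (Fin n) ℤ) = (q+2 : ℕ) • N := by
        rw [← Nat.cast_comm, ← nsmul_eq_mul]
      rw [hcomm, Matrix.smul_apply, nsmul_eq_mul, hq]

    have h2 : (2:ℤ) ^ (2 * m) ∣ (N * N * T) i j := aux_mul_dvd _ _ _ hNN i j
    rw [← h1, hkey]
    simpa using h2.neg_right
  -- derive contradiction
  apply hmtop
  intro i j
  rcases hp.eq_two_or_odd' with h2 | hodd
  · have := hent i j
    rw [h2] at this
    have h21 : (2:ℤ) ^ (2 * m) = 2 * 2 ^ (2 * m - 1) := by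
      rw [← pow_succ']
      congr 1
      omega
    rw [h21] at this
    have := (mul_dvd_mul_iff_left (by norm_num : (2:ℤ) ≠ 0)).mp
      (dvd_trans (dvd_refl _) this)
    exact dvd_trans (pow_dvd_pow 2 (by omega)) this
  · have hcop : IsCoprime ((2:ℤ) ^ (2*m)) (p : ℤ) := by
      have h2p : Nat.Coprime 2 p := (Nat.Prime.coprime_iff_not_dvd Nat.prime_two).mpr
        (fun hdv => by
          have h := Nat.odd_iff.mp hodd
          omega)
      have hpow : Nat.Coprime (2 ^ (2*m)) p := Nat.Coprime.pow_left _ h2p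
      have hic := Nat.isCoprime_iff_coprime.mpr hpow
      exact_mod_cast hic
    have := hcop.dvd_of_dvd_mul_left (hent i j)
    exact dvd_trans (pow_dvd_pow 2 (by omega)) this

lemma aux_mod4_iff {n : ℕ} (M : Matrix (Fin n) (Fin n) ℤ) :
    (Int.castRingHom (ZMod 4)).mapMatrix M = 1 ↔ ∀ i j, (4:ℤ) ∣ (M - 1) i j := by
  rw [RingHom.mapMatrix_apply]
  constructor
  · intro hM i j
    have h := congrFun (congrFun hM i) j
    rw [Matrix.map_apply] at h
    simp only [Int.coe_castRingHom] at h
    have h1 : ((1 : Matrix (Fin n) (Fin n) (ZMod 4)) i j)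
        = (((1 : Matrix (Fin n) (Fin n) ℤ) i j : ℤ) : ZMod 4) := by
      by_cases hij : i = j <;> simp [Matrix.one_apply, hij]
    rw [h1] at h
    have h2 : ((M i j - (1 : Matrix (Fin n) (Fin n) ℤ) i j : ℤ) : ZMod 4) = 0 := by
      push_cast
      rw [h]
      ring
    have := (ZMod.intCast_zmod_eq_zero_iff_dvd _ 4).mp h2
    simpa [Matrix.sub_apply] using this
  · intro hM
    ext i j
    rw [Matrix.map_apply]
    simp only [Int.coe_castRingHom]
    have := (ZMod.intCast_zmod_eq_zero_iff_dvd _ 4).mpr (by exact_mod_cast hM i j)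
    rw [Matrix.sub_apply] at this
    push_cast at this
    have h1 : ((M i j : ℤ) : ZMod 4) = (((1 : Matrix (Fin n) (Fin n) ℤ) i j : ℤ) : ZMod 4) := by
      rw [sub_eq_zero] at this
      exact this
    rw [h1]
    by_cases hij : i = j <;> simp [Matrix.one_apply, hij]

lemma aux_tf {n : ℕ} (g : Matrix.GeneralLinearGroup (Fin n) ℤ)
    (hfin : IsOfFinOrder g)
    (hg : ∀ i j, (4:ℤ) ∣ ((g : Matrix (Fin n) (Fin n) ℤ) - 1) i j) : g = 1 := by
  by_contra hne
  have hd : orderOf g ≠ 0 := hfin.orderOf_pos.ne'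
  have hd1 : orderOf g ≠ 1 := fun h => hne (orderOf_eq_one_iff.mp h)
  have hq : (orderOf g).minFac.Prime := Nat.minFac_prime hd1
  set h := g ^ (orderOf g / (orderOf g).minFac) with hh
  have hordh : orderOf h = (orderOf g).minFac :=
    orderOf_pow_orderOf_div hd (Nat.minFac_dvd _)
  have hpow : h ^ (orderOf g).minFac = 1 := by
    rw [← hordh]; exact pow_orderOf_eq_one h
  have hMat : ((h : Matrix (Fin n) (Fin n) ℤ)) ^ (orderOf g).minFac = 1 := by
    have := congrArg (Units.val) hpow
    simpa using this
  have hgred : (Int.castRingHom (ZMod 4)).mapMatrix (g : Matrix (Fin n) (Fin n) ℤ) = 1 :=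
    (aux_mod4_iff _).mpr hg
  have hhred : (Int.castRingHom (ZMod 4)).mapMatrix (h : Matrix (Fin n) (Fin n) ℤ) = 1 := by
    rw [hh]
    have : ((g ^ (orderOf g / (orderOf g).minFac) : Matrix.GeneralLinearGroup (Fin n) ℤ) :
        Matrix (Fin n) (Fin n) ℤ) = (g : Matrix (Fin n) (Fin n) ℤ) ^ (orderOf g / (orderOf g).minFac) := by
      simp [Units.val_pow_eq_pow_val]
    rw [this, map_pow, hgred, one_pow]
  have hkey := aux_key (h : Matrix (Fin n) (Fin n) ℤ) _ hq hMat ((aux_mod4_iff _).mp hhred)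
  have hh1 : h = 1 := Units.ext hkey
  rw [hh1, orderOf_one] at hordh
  exact hq.one_lt.ne' hordh.symm

lemma aux_bound {n : ℕ} (H : Subgroup (Matrix.GeneralLinearGroup (Fin n) ℤ)) (hH : Finite H) :
    Nat.card H ≤ Nat.card (Matrix (Fin n) (Fin n) (ZMod 4))ˣ := by
  set φ : Matrix.GeneralLinearGroup (Fin n) ℤ →* (Matrix (Fin n) (Fin n) (ZMod 4))ˣ :=
    Units.map ((Int.castRingHom (ZMod 4)).mapMatrix.toMonoidHom) with hφ
  have hker : ∀ x : H, φ (x : Matrix.GeneralLinearGroup (Fin n) ℤ) = 1 →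
      (x : Matrix.GeneralLinearGroup (Fin n) ℤ) = 1 := by
    intro x hx
    have hfinH : IsOfFinOrder x := isOfFinOrder_of_finite x
    have hfin : IsOfFinOrder (x : Matrix.GeneralLinearGroup (Fin n) ℤ) :=
      H.subtype.isOfFinOrder hfinH
    apply aux_tf _ hfin
    apply (aux_mod4_iff _).mp
    have := congrArg Units.val hx
    rw [Units.coe_map, Units.val_one] at this
    exact this
  apply Nat.card_le_card_of_injective
    (fun x : H => φ (x : Matrix.GeneralLinearGroup (Fin n) ℤ))
  intro a b hab
  have hab' : φ (a : Matrix.GeneralLinearGroup (Fin n) ℤ) = φ (b : Matrix.GeneralLinearGroup (Fin n) ℤ) := hab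
  have h1 : φ ((a : Matrix.GeneralLinearGroup (Fin n) ℤ) * (b : Matrix.GeneralLinearGroup (Fin n) ℤ)⁻¹) = 1 := by
    rw [map_mul, map_inv, hab', mul_inv_cancel]
  have h2 := hker (a * b⁻¹) (by simpa using h1)
  have h3 : (a : Matrix.GeneralLinearGroup (Fin n) ℤ) * (b : Matrix.GeneralLinearGroup (Fin n) ℤ)⁻¹ = 1 := by
    simpa using h2
  ext : 1
  exact mul_inv_eq_one.mp h3

/-- The set of invertible integer matrices whose first-column entries below the top
entry are all divisible by `k` (a subgroup of GL(n, ℤ)). -/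
def FirstColDiv (n k : ℕ) [NeZero n] (A : Matrix.GeneralLinearGroup (Fin n) ℤ) : Prop :=
  ∀ i : Fin n, i ≠ 0 → (k : ℤ) ∣ (A : Matrix (Fin n) (Fin n) ℤ) i 0

/-- For n > 1 there is kₙ bounding the order of every finite subgroup of GL(n, ℤ);
moreover for square-free k ≥ kₙ the subgroup of matrices whose (i,1) entries (i ≥ 2)
are divisible by k has index at least k in GL(n, ℤ): there are k elements lying in
pairwise distinct left cosets of it. -/
theorem stmt_17 (n : ℕ) [NeZero n] (hn : 1 < n) :
    ∃ kn : ℕ,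
      (∀ H : Subgroup (Matrix.GeneralLinearGroup (Fin n) ℤ), Finite H → Nat.card H < kn) ∧
      ∀ k : ℕ, kn ≤ k → Squarefree k →
        ∃ f : Fin k → Matrix.GeneralLinearGroup (Fin n) ℤ,
          ∀ i j, i ≠ j → ¬ FirstColDiv n k ((f i)⁻¹ * f j) := by
  refine ⟨Nat.card (Matrix (Fin n) (Fin n) (ZMod 4))ˣ + 1, ?_, ?_⟩
  · intro H hH
    exact Nat.lt_succ_of_le (aux_bound H hH)
  · intro k hk hsq
    -- elementary matrices E(x) = 1 + x • e₁₀
    have h1v : ((1 : Fin n) : ℕ) = 1 := by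
      rw [Fin.val_one']
      exact Nat.mod_eq_of_lt hn
    have h10 : (1 : Fin n) ≠ 0 := by
      intro h
      have := congrArg Fin.val h
      rw [h1v] at this
      simp at this
    set e : Matrix (Fin n) (Fin n) ℤ := Matrix.single (1 : Fin n) 0 1 with he
    have hee : e * e = 0 := Matrix.single_mul_single_of_ne (h := Ne.symm h10) ..
    have key : ∀ x y : ℤ, (1 + x • e) * (1 + y • e) = 1 + (x + y) • e := by
      intro x y
      rw [mul_add, mul_one, add_mul, one_mul, Matrix.smul_mul, Matrix.mul_smul, hee,
        smul_zero, smul_zero, add_smul]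
      abel
    set E : ℤ → Matrix.GeneralLinearGroup (Fin n) ℤ := fun x =>
      ⟨1 + x • e, 1 + (-x) • e, by rw [key]; simp, by rw [key]; simp⟩ with hE
    refine ⟨fun i => E (i : ℤ), ?_⟩
    intro i j hij hdiv
    have hval : (((E (i:ℤ))⁻¹ * E (j:ℤ) : Matrix.GeneralLinearGroup (Fin n) ℤ) :
        Matrix (Fin n) (Fin n) ℤ) = 1 + (-(i:ℤ) + (j:ℤ)) • e := by
      rw [hE]
      simp only [Units.inv_mk, Units.val_mul]
      exact key _ _
    have hd := hdiv (1 : Fin n) h10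
    rw [hval] at hd
    have hentry : (1 + (-(i:ℤ) + (j:ℤ)) • e) (1 : Fin n) 0 = -(i:ℤ) + (j:ℤ) := by
      rw [Matrix.add_apply, Matrix.smul_apply, he, Matrix.single_apply_same,
        Matrix.one_apply_ne h10]
      simp
    rw [hentry] at hd
    have habs : |(-(i:ℤ) + (j:ℤ))| < (k:ℤ) := by
      have hi := i.isLt
      have hj := j.isLt
      rw [abs_lt]
      omega
    have := Int.eq_zero_of_abs_lt_dvd hd habs
    apply hij
    have hi : (i:ℤ) = (j:ℤ) := by omega
    exact Fin.ext (by exact_mod_cast hi)
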